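/- The function ψ(x,y) = (1/κ)·ln( κx/y + √(1 + κ²x²/y²) ) solves the eikonal equation ψ_x² + κ² ψ_y² = 1/y² for all x ∈ ℝ and y > 0, together with ψ(0,y) = 0 and ψ(x,y) > 0 for x > 0. -/

import Mathlib

noncomputable def psiHW (κ x y : ℝ) : ℝ :=
  (1 / κ) * Real.log (κ * x / y + Real.sqrt (1 + κ ^ 2 * x ^ 2 / y ^ 2))

lemma psiHW_eq_arsinh (κ x y : ℝ) :
    psiHW κ x y = (1 / κ) * Real.arsinh (κ * x / y) := by
  have h : 1 + κ ^ 2 * x ^ 2 / y ^ 2 = 1 + (κ * x / y) ^ 2 := by ring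
  rw [psiHW, Real.arsinh, h]

/-- `ψ(x,y) = (1/κ) ln(κx/y + √(1 + κ²x²/y²))` solves the eikonal equation
`ψ_x² + κ² ψ_y² = 1/y²`, with `ψ(0,y) = 0` and `ψ(x,y) > 0` for `x > 0`. -/
theorem psi_solves_eikonal (κ : ℝ) (hκ : 0 < κ) :
    (∀ x y : ℝ, 0 < y →
      (deriv (fun x' => psiHW κ x' y) x) ^ 2
        + κ ^ 2 * (deriv (fun y' => psiHW κ x y') y) ^ 2 = 1 / y ^ 2) ∧
    (∀ y : ℝ, 0 < y → psiHW κ 0 y = 0) ∧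
    (∀ x y : ℝ, 0 < y → 0 < x → 0 < psiHW κ x y) := by
  refine ⟨?_, ?_, ?_⟩
  · intro x y hy
    set u : ℝ := κ * x / y with hu
    have hs : (0:ℝ) < Real.sqrt (1 + u ^ 2) := by
      apply Real.sqrt_pos.2; positivity
    have hsq : Real.sqrt (1 + u ^ 2) ^ 2 = 1 + u ^ 2 := by
      rw [Real.sq_sqrt]; positivity
    -- derivative in x
    have hx1 : HasDerivAt (fun x' : ℝ => κ * x' / y) (κ / y) x := by
      simpa using ((hasDerivAt_id x).const_mul κ).div_const y
    have hx2 : HasDerivAt (fun x' : ℝ => psiHW κ x' y)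
        ((1 / κ) * ((Real.sqrt (1 + u ^ 2))⁻¹ * (κ / y))) x := by
      have := ((Real.hasDerivAt_arsinh u).comp x hx1).const_mul (1 / κ)
      simpa [psiHW_eq_arsinh, Function.comp, hu] using this
    -- derivative in y
    have hy1 : HasDerivAt (fun y' : ℝ => κ * x / y') (κ * x * (-1 / y ^ 2)) y := by
      simpa [div_eq_mul_inv] using ((hasDerivAt_id y).inv hy.ne').const_mul (κ * x)
    have hy2 : HasDerivAt (fun y' : ℝ => psiHW κ x y')
        ((1 / κ) * ((Real.sqrt (1 + u ^ 2))⁻¹ * (κ * x * (-1 / y ^ 2)))) y := by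
      have := ((Real.hasDerivAt_arsinh u).comp y hy1).const_mul (1 / κ)
      simpa [psiHW_eq_arsinh, Function.comp, hu] using this
    rw [hx2.deriv, hy2.deriv]
    have h2 : (Real.sqrt (1 + u ^ 2))⁻¹ ^ 2 = (1 + u ^ 2)⁻¹ := by
      rw [← hsq]; simp
    have hS : Real.sqrt (y ^ 2 + κ ^ 2 * x ^ 2) ^ 2 = y ^ 2 + κ ^ 2 * x ^ 2 :=
      Real.sq_sqrt (by positivity)
    field_simp [hu]
    ring_nf
    have hu2 : y ^ 2 * u ^ 2 = κ ^ 2 * x ^ 2 := by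
      rw [hu, div_pow]; field_simp
    linear_combination (-y ^ 2) * hsq - hu2
  · intro y hy
    simp [psiHW_eq_arsinh]
  · intro x y hy hx
    rw [psiHW_eq_arsinh]
    have : 0 < κ * x / y := by positivity
    have := Real.arsinh_pos_iff.2 this
    positivity
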